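/- Every nonzero 2-dimensional commutative associative algebra over ℂ is isomorphic to exactly one of the following algebras, given by a multiplication table on a basis e1, e2: A01: e1·e1 = e1, e2·e2 = e2; A02: e1·e1 = e1, e1·e2 = e2; A03: e1·e1 = e1; A04: e1·e1 = e2. In particular these four algebras are pairwise non-isomorphic. -/

import Mathlib

noncomputable section

/-- The 2-dimensional complex vector space. -/
abbrev V2 : Type := Fin 2 → ℂ

/-- The bilinear multiplication on `V2` determined by a table of structure constants:
`c i j` is the product of the `i`-th and `j`-th basis vectors. -/
def tm (c : Fin 2 → Fin 2 → V2) : V2 → V2 → V2 :=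
  fun x y => ∑ i, ∑ j, (x i * y j) • c i j

/-- Multiplication table with the given values of `e1*e1`, `e1*e2`, `e2*e1`, `e2*e2`. -/
def tbl (a b c d : V2) : Fin 2 → Fin 2 → V2 := ![![a, b], ![c, d]]

/-- The zero multiplication on `V2`. -/
def zm : V2 → V2 → V2 := fun _ _ => 0

/-- Isomorphism of algebras with one multiplication: a ℂ-linear bijection preserving
the multiplication. -/
def Iso1 {A : Type*} [AddCommGroup A] [Module ℂ A] {B : Type*} [AddCommGroup B]
    [Module ℂ B] (μ : A → A → A) (ν : B → B → B) : Prop :=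
  ∃ φ : A ≃ₗ[ℂ] B, ∀ x y, φ (μ x y) = ν (φ x) (φ y)

/-- Isomorphism of algebras with two multiplications: a ℂ-linear bijection preserving
both multiplications. -/
def Iso2 {A : Type*} [AddCommGroup A] [Module ℂ A] {B : Type*} [AddCommGroup B]
    [Module ℂ B] (μ₁ μ₂ : A → A → A) (ν₁ ν₂ : B → B → B) : Prop :=
  ∃ φ : A ≃ₗ[ℂ] B,
    (∀ x y, φ (μ₁ x y) = ν₁ (φ x) (φ y)) ∧ (∀ x y, φ (μ₂ x y) = ν₂ (φ x) (φ y))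

/-- The commutative associative algebra A01: `e1·e1 = e1`, `e2·e2 = e2`. -/
def cA01 : Fin 2 → Fin 2 → V2 := tbl ![1,0] 0 0 ![0,1]

/-- The commutative associative algebra A02: `e1·e1 = e1`, `e1·e2 = e2·e1 = e2`. -/
def cA02 : Fin 2 → Fin 2 → V2 := tbl ![1,0] ![0,1] ![0,1] 0

/-- The commutative associative algebra A03: `e1·e1 = e1`. -/
def cA03 : Fin 2 → Fin 2 → V2 := tbl ![1,0] 0 0 0

/-- The commutative associative algebra A04: `e1·e1 = e2`. -/
def cA04 : Fin 2 → Fin 2 → V2 := tbl ![0,1] 0 0 0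

/-- The four commutative associative multiplication tables A01–A04. -/
def commAlg : Fin 4 → Fin 2 → Fin 2 → V2 := ![cA01, cA02, cA03, cA04]

/-- Every nonzero 2-dimensional commutative associative algebra over ℂ
is isomorphic to exactly one of A01, A02, A03, A04; in particular these four algebras
are pairwise non-isomorphic. -/
lemma tm_apply (c : Fin 2 → Fin 2 → V2) (x y : V2) :
    tm c x y = (x 0 * y 0) • c 0 0 + (x 0 * y 1) • c 0 1 + (x 1 * y 0) • c 1 0
      + (x 1 * y 1) • c 1 1 := by
  simp [tm, Fin.sum_univ_two]; abel
lemma tmA01 (x y : V2) : tm cA01 x y = ![x 0 * y 0, x 1 * y 1] := by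
  funext k; fin_cases k <;> simp [tm_apply, cA01, tbl]
lemma tmA02 (x y : V2) : tm cA02 x y = ![x 0 * y 0, x 0 * y 1 + x 1 * y 0] := by
  funext k; fin_cases k <;> simp [tm_apply, cA02, tbl]
lemma tmA03 (x y : V2) : tm cA03 x y = ![x 0 * y 0, 0] := by
  funext k; fin_cases k <;> simp [tm_apply, cA03, tbl]
lemma tmA04 (x y : V2) : tm cA04 x y = ![0, x 0 * y 0] := by
  funext k; fin_cases k <;> simp [tm_apply, cA04, tbl]

lemma v2_eq_zero {z : V2} (h0 : z 0 = 0) (h1 : z 1 = 0) : z = 0 := by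
  funext k; fin_cases k <;> assumption

lemma annA03 : ∃ z : V2, z ≠ 0 ∧ ∀ y, tm cA03 z y = 0 := by
  refine ⟨![0,1], fun h => by simpa using congrFun h 1, fun y => ?_⟩
  rw [tmA03]; exact v2_eq_zero (by simp) (by simp)

lemma annA04 : ∃ z : V2, z ≠ 0 ∧ ∀ y, tm cA04 z y = 0 := by
  refine ⟨![0,1], fun h => by simpa using congrFun h 1, fun y => ?_⟩
  rw [tmA04]; exact v2_eq_zero (by simp) (by simp)

lemma noannA01 : ¬ ∃ z : V2, z ≠ 0 ∧ ∀ y, tm cA01 z y = 0 := by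
  rintro ⟨z, hz, h⟩
  have h0 := congrFun (h z) 0
  have h1 := congrFun (h z) 1
  rw [tmA01] at h0 h1
  simp only [Matrix.cons_val_zero, Matrix.cons_val_one, Matrix.head_cons, Pi.zero_apply,
    mul_self_eq_zero] at h0 h1
  exact hz (v2_eq_zero h0 h1)

lemma noannA02 : ¬ ∃ z : V2, z ≠ 0 ∧ ∀ y, tm cA02 z y = 0 := by
  rintro ⟨z, hz, h⟩
  have h0 := congrFun (h ![1,0]) 0
  have h1 := congrFun (h ![1,0]) 1
  rw [tmA02] at h0 h1
  simp at h0 h1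
  exact hz (v2_eq_zero h0 h1)

lemma nilA02 : ∃ z : V2, z ≠ 0 ∧ tm cA02 z z = 0 := by
  refine ⟨![0,1], fun h => by simpa using congrFun h 1, ?_⟩
  rw [tmA02]; exact v2_eq_zero (by simp) (by simp)

lemma nonilA01 : ¬ ∃ z : V2, z ≠ 0 ∧ tm cA01 z z = 0 := by
  rintro ⟨z, hz, h⟩
  have h0 := congrFun h 0
  have h1 := congrFun h 1
  rw [tmA01] at h0 h1
  simp only [Matrix.cons_val_zero, Matrix.cons_val_one, Matrix.head_cons, Pi.zero_apply,
    mul_self_eq_zero] at h0 h1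
  exact hz (v2_eq_zero h0 h1)

lemma idemA03 : ∃ z : V2, z ≠ 0 ∧ tm cA03 z z = z := by
  refine ⟨![1,0], fun h => by simpa using congrFun h 0, ?_⟩
  rw [tmA03]; funext k; fin_cases k <;> simp

lemma noidemA04 : ¬ ∃ z : V2, z ≠ 0 ∧ tm cA04 z z = z := by
  rintro ⟨z, hz, h⟩
  have h0 := congrFun h 0
  have h1 := congrFun h 1
  rw [tmA04] at h0 h1
  simp only [Matrix.cons_val_zero, Matrix.cons_val_one, Matrix.head_cons] at h0 h1
  refine hz (v2_eq_zero h0.symm ?_)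
  rw [← h1, h0.symm, mul_zero]
lemma Iso1.symm {A : Type*} [AddCommGroup A] [Module ℂ A] {B : Type*} [AddCommGroup B]
    [Module ℂ B] {μ : A → A → A} {ν : B → B → B} (h : Iso1 μ ν) : Iso1 ν μ := by
  obtain ⟨φ, hφ⟩ := h
  refine ⟨φ.symm, fun x y => ?_⟩
  apply φ.injective
  rw [φ.apply_symm_apply, hφ, φ.apply_symm_apply, φ.apply_symm_apply]

lemma Iso1.ann {A : Type*} [AddCommGroup A] [Module ℂ A] {B : Type*} [AddCommGroup B]
    [Module ℂ B] {μ : A → A → A} {ν : B → B → B} (h : Iso1 μ ν)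
    (hA : ∃ z : A, z ≠ 0 ∧ ∀ y, μ z y = 0) : ∃ z : B, z ≠ 0 ∧ ∀ y, ν z y = 0 := by
  obtain ⟨φ, hφ⟩ := h
  obtain ⟨z, hz, hz2⟩ := hA
  refine ⟨φ z, by simpa using hz, fun y => ?_⟩
  have := hφ z (φ.symm y)
  rw [hz2, map_zero, φ.apply_symm_apply] at this
  exact this.symm

lemma Iso1.nil {A : Type*} [AddCommGroup A] [Module ℂ A] {B : Type*} [AddCommGroup B]
    [Module ℂ B] {μ : A → A → A} {ν : B → B → B} (h : Iso1 μ ν)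
    (hA : ∃ z : A, z ≠ 0 ∧ μ z z = 0) : ∃ z : B, z ≠ 0 ∧ ν z z = 0 := by
  obtain ⟨φ, hφ⟩ := h
  obtain ⟨z, hz, hz2⟩ := hA
  exact ⟨φ z, by simpa using hz, by rw [← hφ, hz2, map_zero]⟩

lemma Iso1.idem {A : Type*} [AddCommGroup A] [Module ℂ A] {B : Type*} [AddCommGroup B]
    [Module ℂ B] {μ : A → A → A} {ν : B → B → B} (h : Iso1 μ ν)
    (hA : ∃ z : A, z ≠ 0 ∧ μ z z = z) : ∃ z : B, z ≠ 0 ∧ ν z z = z := by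
  obtain ⟨φ, hφ⟩ := h
  obtain ⟨z, hz, hz2⟩ := hA
  exact ⟨φ z, by simpa using hz, by rw [← hφ, hz2]⟩

lemma part2 : ∀ i j : Fin 4, Iso1 (tm (commAlg i)) (tm (commAlg j)) → i = j := by
  intro i j h
  fin_cases i <;> fin_cases j <;>
    simp only [commAlg, Matrix.cons_val_zero, Matrix.cons_val_one, Matrix.head_cons,
      Matrix.cons_val_two, Matrix.cons_val_three, Matrix.tail_cons, Fin.mk_one,
      Fin.isValue] at h
  · rfl
  · exact absurd (h.symm.nil nilA02) nonilA01
  · exact absurd (h.symm.ann annA03) noannA01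
  · exact absurd (h.symm.ann annA04) noannA01
  · exact absurd (h.nil nilA02) nonilA01
  · rfl
  · exact absurd (h.symm.ann annA03) noannA02
  · exact absurd (h.symm.ann annA04) noannA02
  · exact absurd (h.ann annA03) noannA01
  · exact absurd (h.ann annA03) noannA02
  · rfl
  · exact absurd (h.idem idemA03) noidemA04
  · exact absurd (h.ann annA04) noannA01
  · exact absurd (h.ann annA04) noannA02
  · exact absurd (h.symm.idem idemA03) noidemA04
  · rfl

section AuxSec
variable {A : Type*} [AddCommGroup A] [Module ℂ A]

lemma coords_eq (b : Module.Basis (Fin 2) ℂ A) {p q p' q' : ℂ}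
    (h : p • b 0 + q • b 1 = p' • b 0 + q' • b 1) : p = p' ∧ q = q' := by
  have hg : ∑ i, (![p - p', q - q'] : Fin 2 → ℂ) i • b i = 0 := by
    rw [Fin.sum_univ_two]
    simp only [Matrix.cons_val_zero, Matrix.cons_val_one, Matrix.head_cons, sub_smul]
    rw [← sub_eq_zero] at h
    rw [← h]; abel
  have h0 := Fintype.linearIndependent_iff.mp b.linearIndependent _ hg 0
  have h1 := Fintype.linearIndependent_iff.mp b.linearIndependent _ hg 1
  simp only [Matrix.cons_val_zero, Matrix.cons_val_one, Matrix.head_cons, sub_eq_zero] at h0 h1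
  exact ⟨h0, h1⟩

lemma exists_basis_combo (hdim : Module.finrank ℂ A = 2) (b : Module.Basis (Fin 2) ℂ A)
    (p q r s : ℂ) (hdet : p * s - q * r ≠ 0) :
    ∃ b' : Module.Basis (Fin 2) ℂ A, b' 0 = p • b 0 + q • b 1 ∧ b' 1 = r • b 0 + s • b 1 := by
  have hli : LinearIndependent ℂ ![p • b 0 + q • b 1, r • b 0 + s • b 1] := by
    rw [LinearIndependent.pair_iff]
    intro u v huv
    have h' : (u * p + v * r) • b 0 + (u * q + v * s) • b 1 = (0:ℂ) • b 0 + (0:ℂ) • b 1 := by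
      rw [show ((0:ℂ) • b 0 + (0:ℂ) • b 1 : A) = 0 by simp, ← huv]; module
    obtain ⟨h0, h1⟩ := coords_eq b h'
    have hu : u * (p * s - q * r) = 0 := by linear_combination s * h0 - r * h1
    have hv : v * (p * s - q * r) = 0 := by linear_combination p * h1 - q * h0
    exact ⟨(mul_eq_zero.mp hu).resolve_right hdet, (mul_eq_zero.mp hv).resolve_right hdet⟩
  refine ⟨basisOfLinearIndependentOfCardEqFinrank hli (by simp [hdim]), ?_, ?_⟩ <;>
    rw [coe_basisOfLinearIndependentOfCardEqFinrank] <;> simp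

lemma iso_of_basis (mul : A →ₗ[ℂ] A →ₗ[ℂ] A) (b : Module.Basis (Fin 2) ℂ A)
    (c : Fin 2 → Fin 2 → V2)
    (h : ∀ i j, mul (b i) (b j) = c i j 0 • b 0 + c i j 1 • b 1) :
    Iso1 (fun x y => mul x y) (tm c) := by
  refine ⟨b.equivFun, fun x y => ?_⟩
  have hx : x = b.equivFun x 0 • b 0 + b.equivFun x 1 • b 1 := by
    have := b.sum_equivFun x; rw [Fin.sum_univ_two] at this; exact this.symm
  have hy : y = b.equivFun y 0 • b 0 + b.equivFun y 1 • b 1 := by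
    have := b.sum_equivFun y; rw [Fin.sum_univ_two] at this; exact this.symm
  conv_lhs => rw [hx, hy]
  rw [tm_apply]
  simp only [map_add, map_smul, LinearMap.add_apply, LinearMap.smul_apply, h]
  funext k
  fin_cases k <;>
    simp [Module.Basis.equivFun_self, Pi.add_apply, Pi.smul_apply, smul_eq_mul] <;> ring

set_option maxHeartbeats 6000000 in
lemma part1 (hdim : Module.finrank ℂ A = 2)
    (mul : A →ₗ[ℂ] A →ₗ[ℂ] A)
    (hcomm : ∀ x y : A, mul x y = mul y x)
    (hassoc : ∀ x y z : A, mul (mul x y) z = mul x (mul y z))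
    (hex : ∃ x : A, LinearIndependent ℂ ![x, mul x x]) :
    ∃ i : Fin 4, Iso1 (fun x y => mul x y) (tm (commAlg i)) := by
  obtain ⟨x, hli⟩ := hex
  obtain ⟨y, hy⟩ : ∃ y, mul x x = y := ⟨_, rfl⟩
  rw [hy] at hli
  let b : Module.Basis (Fin 2) ℂ A := basisOfLinearIndependentOfCardEqFinrank hli (by simp [hdim])
  have hb : ⇑b = ![x, y] := coe_basisOfLinearIndependentOfCardEqFinrank hli _
  have hb0 : b 0 = x := by rw [hb]; simp
  have hb1 : b 1 = y := by rw [hb]; simp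
  obtain ⟨α, β, hxy⟩ : ∃ α β : ℂ, mul x y = α • x + β • y := by
    refine ⟨b.repr (mul x y) 0, b.repr (mul x y) 1, ?_⟩
    have := b.sum_repr (mul x y)
    rw [Fin.sum_univ_two, hb0, hb1] at this
    exact this.symm
  have hyx : mul y x = α • x + β • y := by rw [hcomm]; exact hxy
  have hyy : mul y y = (α*β) • x + (α + β^2) • y := by
    calc mul y y = mul (mul x x) y := by rw [hy]
      _ = mul x (mul x y) := hassoc x x y
      _ = mul x (α • x + β • y) := by rw [hxy]
      _ = α • mul x x + β • mul x y := by simp only [map_add, map_smul]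
      _ = α • y + β • (α • x + β • y) := by rw [hy, hxy]
      _ = (α*β) • x + (α + β^2) • y := by module
  by_cases hα : α = 0
  · by_cases hβ : β = 0
    · -- A04
      refine ⟨3, iso_of_basis mul b cA04 ?_⟩
      intro i j
      fin_cases i <;> fin_cases j <;>
        simp only [Fin.zero_eta, Fin.mk_one, Fin.isValue, hb0, hb1, cA04, tbl,
          Matrix.cons_val_zero, Matrix.cons_val_one, Matrix.head_cons, Matrix.cons_val',
          Matrix.empty_val', Matrix.cons_val_fin_one, Pi.zero_apply,
          Matrix.vecHead, Matrix.vecTail] <;>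
        simp only [hy, hxy, hyx, hyy, hα, hβ] <;>
        match_scalars <;> simp
    · -- A03
      obtain ⟨b', hb'0, hb'1⟩ := exists_basis_combo hdim b 0 (1/β^2) 1 (-(1/β)) (by
        rw [show (0:ℂ) * (-(1/β)) - (1/β^2) * 1 = -(1/β^2) by ring]
        exact neg_ne_zero.mpr (one_div_ne_zero (pow_ne_zero 2 hβ)))
      rw [hb0, hb1] at hb'0 hb'1
      refine ⟨2, iso_of_basis mul b' cA03 ?_⟩
      intro i j
      fin_cases i <;> fin_cases j <;>
        simp only [Fin.zero_eta, Fin.mk_one, Fin.isValue, hb'0, hb'1, cA03, tbl,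
          Matrix.cons_val_zero, Matrix.cons_val_one, Matrix.head_cons, Matrix.cons_val',
          Matrix.empty_val', Matrix.cons_val_fin_one, Pi.zero_apply,
          Matrix.vecHead, Matrix.vecTail] <;>
        simp only [map_add, map_smul, LinearMap.add_apply, LinearMap.smul_apply,
          hy, hxy, hyx, hyy, hα] <;>
        match_scalars <;> (try field_simp) <;> (try ring_nf) <;> (try field_simp) <;> (try ring1)
  · by_cases hD : β^2 + 4*α = 0
    · -- A02
      have hβ : β ≠ 0 := by
        intro h; apply hα
        have : (4:ℂ) * α = 0 := by linear_combination hD - β * h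
        simpa using this
      have hα2 : α = -(β^2)/4 := by linear_combination hD / 4
      rw [hα2] at hxy hyx hyy
      obtain ⟨b', hb'0, hb'1⟩ := exists_basis_combo hdim b (4/β) (-(4/β^2)) (-1) (2/β) (by
        rw [show (4/β) * (2/β) - (-(4/β^2)) * (-1) = 4/β^2 by ring]
        exact div_ne_zero (by norm_num) (pow_ne_zero 2 hβ))
      rw [hb0, hb1] at hb'0 hb'1
      refine ⟨1, iso_of_basis mul b' cA02 ?_⟩
      intro i j
      fin_cases i <;> fin_cases j <;>
        simp only [Fin.zero_eta, Fin.mk_one, Fin.isValue, hb'0, hb'1, cA02, tbl,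
          Matrix.cons_val_zero, Matrix.cons_val_one, Matrix.head_cons, Matrix.cons_val',
          Matrix.empty_val', Matrix.cons_val_fin_one, Pi.zero_apply,
          Matrix.vecHead, Matrix.vecTail] <;>
        simp only [map_add, map_smul, LinearMap.add_apply, LinearMap.smul_apply,
          hy, hxy, hyx, hyy] <;>
        match_scalars <;> (try field_simp) <;> (try ring_nf) <;> (try field_simp) <;>
        (try ring1)
    · -- A01
      obtain ⟨r, s, hβrs, hαrs, hrne, hsne, hrsne, hsrne⟩ :
          ∃ r s : ℂ, β = r + s ∧ α = -(r*s) ∧ r ≠ 0 ∧ s ≠ 0 ∧ r - s ≠ 0 ∧ s - r ≠ 0 := by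
        obtain ⟨dd, hdd⟩ := IsAlgClosed.exists_pow_nat_eq (β^2 + 4*α) (two_pos)
        have hdne : dd ≠ 0 := by
          intro h; apply hD; rw [← hdd, h]; ring
        refine ⟨(β+dd)/2, (β-dd)/2, by ring, by linear_combination (-1/4 : ℂ) * hdd,
          ?_, ?_, ?_, ?_⟩
        · intro h; apply hα
          have hs' : α = -(((β+dd)/2) * ((β-dd)/2)) := by linear_combination (-1/4 : ℂ) * hdd
          rw [hs', h]; ring
        · intro h; apply hα
          have hs' : α = -(((β+dd)/2) * ((β-dd)/2)) := by linear_combination (-1/4 : ℂ) * hdd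
          rw [hs', h]; ring
        · intro h; apply hdne; linear_combination h
        · intro h; apply hdne; linear_combination -h
      rw [hαrs, hβrs] at hxy hyx hyy
      obtain ⟨b', hb'0, hb'1⟩ := exists_basis_combo hdim b
        (-s/(r*(r-s))) (1/(r*(r-s))) (-r/(s*(s-r))) (1/(s*(s-r))) (by
          rw [show (-s/(r*(r-s))) * (1/(s*(s-r))) - (1/(r*(r-s))) * (-r/(s*(s-r)))
              = 1/(r*s*(s-r)) by field_simp; ring]
          exact one_div_ne_zero (mul_ne_zero (mul_ne_zero hrne hsne) hsrne))
      rw [hb0, hb1] at hb'0 hb'1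
      refine ⟨0, iso_of_basis mul b' cA01 ?_⟩
      intro i j
      fin_cases i <;> fin_cases j <;>
        simp only [Fin.zero_eta, Fin.mk_one, Fin.isValue, hb'0, hb'1, cA01, tbl,
          Matrix.cons_val_zero, Matrix.cons_val_one, Matrix.head_cons, Matrix.cons_val',
          Matrix.empty_val', Matrix.cons_val_fin_one, Pi.zero_apply,
          Matrix.vecHead, Matrix.vecTail] <;>
        simp only [map_add, map_smul, LinearMap.add_apply, LinearMap.smul_apply,
          hy, hxy, hyx, hyy] <;>
        match_scalars <;> field_simp <;>
          (first
            | ring1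
            | (rw [div_eq_one_iff_eq (by apply_rules [mul_ne_zero, hrne, hsne, hrsne, hsrne])]
               ring1))

lemma degenerate_case (hdim : Module.finrank ℂ A = 2)
    (mul : A →ₗ[ℂ] A →ₗ[ℂ] A)
    (hcomm : ∀ x y : A, mul x y = mul y x)
    (hassoc : ∀ x y z : A, mul (mul x y) z = mul x (mul y z))
    (hnz : ∃ x y : A, mul x y ≠ 0)
    (hex : ∀ x : A, ¬ LinearIndependent ℂ ![x, mul x x]) : False := by
  have hFD : Module.Finite ℂ A := Module.finite_of_finrank_pos (by omega)
  let b : Module.Basis (Fin 2) ℂ A := Module.finBasisOfFinrankEq ℂ A hdim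
  -- every nonzero x has mul x x = c • x
  have H : ∀ x : A, x ≠ 0 → ∃ c : ℂ, mul x x = c • x := by
    intro x hx
    have h := hex x
    rw [LinearIndependent.pair_iff' hx] at h
    push_neg at h
    obtain ⟨cc, hcc⟩ := h
    exact ⟨cc, hcc.symm⟩
  set u := b 0 with hu
  set v := b 1 with hv
  obtain ⟨a, ha⟩ := H u (b.ne_zero 0)
  obtain ⟨e2, hbb⟩ := H v (b.ne_zero 1)
  obtain ⟨c, d, huv⟩ : ∃ c d : ℂ, mul u v = c • u + d • v := by
    refine ⟨b.repr (mul u v) 0, b.repr (mul u v) 1, ?_⟩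
    have := b.sum_repr (mul u v)
    rw [Fin.sum_univ_two] at this
    exact this.symm
  have huvne : u + v ≠ 0 := by
    intro h
    have h' : (1:ℂ) • u + (1:ℂ) • v = (0:ℂ) • u + (0:ℂ) • v := by
      rw [show ((0:ℂ) • u + (0:ℂ) • v : A) = 0 by simp, ← h]; module
    exact one_ne_zero (coords_eq b h').1
  have huvne' : u - v ≠ 0 := by
    intro h
    have h' : (1:ℂ) • u + (-1:ℂ) • v = (0:ℂ) • u + (0:ℂ) • v := by
      rw [show ((0:ℂ) • u + (0:ℂ) • v : A) = 0 by simp, ← h]; module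
    exact one_ne_zero (coords_eq b h').1
  obtain ⟨e, he⟩ := H (u + v) huvne
  obtain ⟨f, hf⟩ := H (u - v) huvne'
  -- expand
  have hvu : mul v u = c • u + d • v := by rw [hcomm]; exact huv
  have he' : (a + 2*c) • u + (e2 + 2*d) • v = e • u + e • v := by
    have : mul (u + v) (u + v) = e • u + e • v := by rw [he]; module
    rw [← this]
    simp only [map_add, map_smul, LinearMap.add_apply, ha, hbb, huv, hvu]
    module
  have hf' : (a - 2*c) • u + (e2 - 2*d) • v = f • u + (-f) • v := by
    have : mul (u - v) (u - v) = f • u + (-f) • v := by rw [hf]; module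
    rw [← this]
    simp only [map_sub, map_smul, LinearMap.sub_apply, ha, hbb, huv, hvu]
    module
  obtain ⟨hE1a, hE1b⟩ := coords_eq b he'
  obtain ⟨hE2a, hE2b⟩ := coords_eq b hf'
  -- a + c = e, e2 + d = e ; a - c = f, e2 - d = -f
  have had : a = 2 * d := by linear_combination (hE1a - hE1b + hE2a + hE2b) / 2
  have hbc : e2 = 2 * c := by linear_combination (hE2a + hE2b - hE1a + hE1b) / 2
  -- associativity u u v
  have h1 : (a * c) • u + (a * d) • v = (c * a + d * c) • u + (d * d) • v := by
    have h := hassoc u u v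
    rw [ha] at h
    have lhs : mul ((a : ℂ) • u) v = (a * c) • u + (a * d) • v := by
      simp only [map_smul, LinearMap.smul_apply, huv]; module
    have rhs : mul u (mul u v) = (c * a + d * c) • u + (d * d) • v := by
      rw [huv]
      simp only [map_add, map_smul, ha, huv]
      module
    rw [lhs, rhs] at h
    exact h
  obtain ⟨hA1, hA2⟩ := coords_eq b h1
  -- a*d = d*d, a = 2d ⟹ d = 0
  have hd0 : d = 0 := by
    have : d * d = 0 := by linear_combination hA2 - d * had
    exact (mul_self_eq_zero).mp this
  have ha0 : a = 0 := by rw [had, hd0, mul_zero]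
  -- associativity v v u
  have h2 : (e2 * c) • u + (e2 * d) • v = (c * c) • u + (c * d + d * e2) • v := by
    have h := hassoc v v u
    rw [hbb] at h
    have lhs : mul ((e2 : ℂ) • v) u = (e2 * c) • u + (e2 * d) • v := by
      simp only [map_smul, LinearMap.smul_apply, hvu]; module
    have rhs : mul v (mul v u) = (c * c) • u + (c * d + d * e2) • v := by
      rw [hvu]
      simp only [map_add, map_smul, hbb, hvu]
      module
    rw [lhs, rhs] at h
    exact h
  obtain ⟨hB1, hB2⟩ := coords_eq b h2
  have hc0 : c = 0 := by
    have : c * c = 0 := by linear_combination hB1 - c * hbc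
    exact (mul_self_eq_zero).mp this
  have hb0 : e2 = 0 := by rw [hbc, hc0, mul_zero]
  -- now all products vanish
  obtain ⟨x, y, hxy⟩ := hnz
  apply hxy
  have hx := b.sum_repr x
  have hy := b.sum_repr y
  rw [Fin.sum_univ_two] at hx hy
  rw [← hx, ← hy]
  simp only [map_add, map_smul, LinearMap.add_apply, LinearMap.smul_apply, ← hu, ← hv, ha, hbb, huv, hvu,
    ha0, hb0, hc0, hd0]
  module

end AuxSec

theorem statement1 (A : Type*) [AddCommGroup A] [Module ℂ A]
    (hdim : Module.finrank ℂ A = 2)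
    (mul : A →ₗ[ℂ] A →ₗ[ℂ] A)
    (hcomm : ∀ x y : A, mul x y = mul y x)
    (hassoc : ∀ x y z : A, mul (mul x y) z = mul x (mul y z))
    (hnz : ∃ x y : A, mul x y ≠ 0) :
    (∃ i : Fin 4, Iso1 (fun x y => mul x y) (tm (commAlg i))) ∧
    (∀ i j : Fin 4, Iso1 (tm (commAlg i)) (tm (commAlg j)) → i = j) := by
  constructor
  · by_cases hex : ∃ x : A, LinearIndependent ℂ ![x, mul x x]
    · exact part1 hdim mul hcomm hassoc hex
    · exact (degenerate_case hdim mul hcomm hassoc hnz (by push_neg at hex; exact hex)).elim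
  · exact part2
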